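/- Let k be a field, R = k[a, b, c, d, e], R' = k[a, b, c, d] ⊆ R, and let M₃ = R/((a − b)(e − b), (c − d)(e − d)). Let M₃' be the R'-submodule of M₃ generated by the classes of 1 and e, and let M₃'' be the R-submodule of M₃ generated by the class of (e − b)(e − d), regarded as an R'-submodule by restriction of scalars. Then M₃ is the internal direct sum M₃ = M₃' ⊕ M₃'' of R'-submodules. -/

import Mathlib

open MvPolynomial Polynomial

set_option maxHeartbeats 1000000
set_option synthInstance.maxHeartbeats 400000

/-- In `R = k[a, b, c, d, e]`, realized as `(k[a, b, c, d])[e]`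
(so `R' = k[a, b, c, d] = MvPolynomial (Fin 4) k` is the base ring,
`a = C (X 0)`, `b = C (X 1)`, `c = C (X 2)`, `d = C (X 3)`, `e = Polynomial.X`),
let `M₃ = R/((a − b)(e − b), (c − d)(e − d))`.  Then `M₃` is the internal direct sum
of the `R'`-submodule `M₃'` generated by the classes of `1` and `e` and the
`R`-submodule `M₃''` generated by the class of `(e − b)(e − d)`
(viewed as an `R'`-submodule by restriction of scalars). -/
theorem IIb_M3_decomposition (k : Type*) [Field k] :
    ∀ I : Ideal (Polynomial (MvPolynomial (Fin 4) k)),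
      I = Ideal.span {(Polynomial.C (X 0) - Polynomial.C (X 1)) *
            (Polynomial.X - Polynomial.C (X 1)),
          (Polynomial.C (X 2) - Polynomial.C (X 3)) *
            (Polynomial.X - Polynomial.C (X 3))} →
      (Submodule.span (MvPolynomial (Fin 4) k)
          {(1 : Polynomial (MvPolynomial (Fin 4) k) ⧸ I),
            Ideal.Quotient.mk I Polynomial.X} ⊔
        Submodule.restrictScalars (MvPolynomial (Fin 4) k)
          (Submodule.span (Polynomial (MvPolynomial (Fin 4) k))
            {Ideal.Quotient.mk I ((Polynomial.X - Polynomial.C (X 1)) *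
              (Polynomial.X - Polynomial.C (X 3)))}) = ⊤) ∧
      (Submodule.span (MvPolynomial (Fin 4) k)
          {(1 : Polynomial (MvPolynomial (Fin 4) k) ⧸ I),
            Ideal.Quotient.mk I Polynomial.X} ⊓
        Submodule.restrictScalars (MvPolynomial (Fin 4) k)
          (Submodule.span (Polynomial (MvPolynomial (Fin 4) k))
            {Ideal.Quotient.mk I ((Polynomial.X - Polynomial.C (X 1)) *
              (Polynomial.X - Polynomial.C (X 3)))}) = ⊥) := by
  intro I hI
  subst hI
  set f₁ : Polynomial (MvPolynomial (Fin 4) k) :=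
      (Polynomial.C (X 0) - Polynomial.C (X 1)) *
      (Polynomial.X - Polynomial.C (X 1)) with hf₁
  set f₂ : Polynomial (MvPolynomial (Fin 4) k) :=
      (Polynomial.C (X 2) - Polynomial.C (X 3)) *
      (Polynomial.X - Polynomial.C (X 3)) with hf₂
  set g : Polynomial (MvPolynomial (Fin 4) k) :=
      (Polynomial.X - Polynomial.C (X 1)) *
      (Polynomial.X - Polynomial.C (X 3)) with hg
  set I : Ideal (Polynomial (MvPolynomial (Fin 4) k)) := Ideal.span {f₁, f₂} with hIdef
  set mk := Ideal.Quotient.mk I with hmk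
  have hgmonic : g.Monic := (monic_X_sub_C _).mul (monic_X_sub_C _)
  have hgdeg : g.natDegree = 2 := by
    rw [hg, natDegree_mul (X_sub_C_ne_zero _) (X_sub_C_ne_zero _),
      natDegree_X_sub_C, natDegree_X_sub_C]
  have hsmul : ∀ (s : MvPolynomial (Fin 4) k) (y : Polynomial (MvPolynomial (Fin 4) k)),
      s • mk y = mk (Polynomial.C s * y) := by
    intro s y
    rw [← Polynomial.smul_eq_C_mul]
    exact (Submodule.Quotient.mk_smul I s y).symm
  have hsmulA : ∀ (q y : Polynomial (MvPolynomial (Fin 4) k)),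
      q • mk y = mk (q * y) := by
    intro q y
    rw [← smul_eq_mul]
    exact (Submodule.Quotient.mk_smul I q y).symm
  constructor
  · -- sup = ⊤
    rw [eq_top_iff]
    rintro x -
    obtain ⟨f, rfl⟩ := Ideal.Quotient.mk_surjective (I := I) x
    have hdiv : f %ₘ g + g * (f /ₘ g) = f := modByMonic_add_div f g
    have hrdeg : (f %ₘ g).natDegree ≤ 1 := by
      have hg1 : g ≠ 1 := fun h => by simp [h] at hgdeg
      have := natDegree_modByMonic_lt f hgmonic hg1
      omega
    obtain ⟨c1, c0, hr⟩ : ∃ a b, f %ₘ g = Polynomial.C a * Polynomial.X + Polynomial.C b :=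
      exists_eq_X_add_C_of_natDegree_le_one hrdeg
    have hone : (1 : Polynomial (MvPolynomial (Fin 4) k) ⧸ I) = mk 1 := rfl
    have key : mk f = c0 • (1 : Polynomial (MvPolynomial (Fin 4) k) ⧸ I) +
        c1 • mk Polynomial.X + (f /ₘ g) • mk g := by
      rw [hone, hsmul, hsmul, hsmulA, ← map_add mk, ← map_add mk]
      congr 1
      conv_lhs => rw [← hdiv, hr]
      ring
    rw [key]
    refine add_mem (add_mem ?_ ?_) ?_
    · exact Submodule.mem_sup_left (Submodule.smul_mem _ _
        (Submodule.subset_span (Set.mem_insert _ _)))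
    · exact Submodule.mem_sup_left (Submodule.smul_mem _ _
        (Submodule.subset_span (Set.mem_insert_of_mem _ rfl)))
    · refine Submodule.mem_sup_right ?_
      rw [Submodule.restrictScalars_mem]
      exact Submodule.smul_mem _ _ (Submodule.mem_span_singleton_self _)
  · -- inf = ⊥
    rw [eq_bot_iff]
    intro x hx
    obtain ⟨hx1, hx2⟩ := Submodule.mem_inf.mp hx
    rw [Submodule.mem_span_pair] at hx1
    obtain ⟨s, t, hst⟩ := hx1
    rw [Submodule.restrictScalars_mem, Submodule.mem_span_singleton] at hx2
    obtain ⟨q, hq⟩ := hx2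
    have hone : (1 : Polynomial (MvPolynomial (Fin 4) k) ⧸ I) = mk 1 := rfl
    have hx : mk (Polynomial.C s + Polynomial.C t * Polynomial.X) = x := by
      rw [← hst, hone, hsmul, hsmul, mul_one, ← map_add mk]
    have hx' : mk (q * g) = x := by
      rw [← hq, hsmulA]
    have hmem : Polynomial.C s + Polynomial.C t * Polynomial.X - q * g ∈ I := by
      rw [← Ideal.Quotient.eq_zero_iff_mem]
      show mk _ = 0
      rw [map_sub, hx, hx', sub_self]
    rw [hIdef, Ideal.mem_span_pair] at hmem
    obtain ⟨p, w, hpw⟩ := hmem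
    obtain ⟨p', hp'⟩ : Polynomial.X - Polynomial.C (X 3) ∣
        p - Polynomial.C (p.eval (X 3)) := X_sub_C_dvd_sub_C_eval
    obtain ⟨w', hw'⟩ : Polynomial.X - Polynomial.C (X 1) ∣
        w - Polynomial.C (w.eval (X 1)) := X_sub_C_dvd_sub_C_eval
    set u : MvPolynomial (Fin 4) k := p.eval (X 3) with hu
    set v : MvPolynomial (Fin 4) k := w.eval (X 1) with hv
    set Q : Polynomial (MvPolynomial (Fin 4) k) :=
        q + p' * (Polynomial.C (X 0) - Polynomial.C (X 1)) +
        w' * (Polynomial.C (X 2) - Polynomial.C (X 3)) with hQ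
    have key : Polynomial.C s + Polynomial.C t * Polynomial.X =
        Polynomial.C u * f₁ + Polynomial.C v * f₂ + Q * g := by
      rw [hf₁, hf₂, hg, hQ]
      linear_combination f₁ * hp' + f₂ * hw' - hpw
    have hQ0 : Q = 0 := by
      by_contra hQne
      have h1 : (Q * g).natDegree = Q.natDegree + 2 := by
        rw [natDegree_mul hQne hgmonic.ne_zero, hgdeg]
      have h2 : (Q * g).natDegree ≤ 1 := by
        have hQg : Q * g =
            Polynomial.C (t - u * (X 0 - X 1) - v * (X 2 - X 3)) * Polynomial.X +
            Polynomial.C (s + u * ((X 0 - X 1) * X 1) + v * ((X 2 - X 3) * X 3)) := by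
          rw [hf₁, hf₂] at key
          simp only [map_sub, map_add, map_mul]
          linear_combination -key
        rw [hQg]
        exact natDegree_linear_le
      omega
    have hfin : Polynomial.C s + Polynomial.C t * Polynomial.X ∈ I := by
      rw [hIdef, Ideal.mem_span_pair]
      exact ⟨Polynomial.C u, Polynomial.C v, by rw [hf₁, hf₂, key, hQ0]; ring⟩
    rw [Submodule.mem_bot, ← hx]
    rw [hmk, Ideal.Quotient.eq_zero_iff_mem]
    exact hfin
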